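/- Consider the random walk on ℤ with parameters p,q>0, p+q≤1, r=1-p-q, ρ=p/q≠1, and two multiple-function barriers at 0 and N>0: at 0 the probabilities are p₀ (to +1), q₀ (to -1), r₀ (stay), s₀ (absorb) with p₀+q₀+r₀+s₀=1 and p₀q₀s₀>0; similarly p_N,q_N,r_N,s_N at N. Starting at i₀ with 0<i₀<N, the expected number y₀ of visits to 0 equals [(1-ρ^{N-i₀})(s_N + p_N(1-ρ^{-1})) + q_N(1-ρ)] / ([s₀(1-ρ^N) + p₀(ρ^{N-1}-ρ^N)][s_N + p_N(1-ρ^{-1})] + s₀q_N(1-ρ)]. -/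

import Mathlib

set_option maxHeartbeats 1000000 in
/-- Two multiple-function barriers at 0 and N on ℤ, ρ = p/q ≠ 1, start at 0 < i₀ < N:
    any solution (y₀,y₁) of the 2×2 linear system of Theorem 2.1 (the expected numbers of
    visits to the barriers) is given by the explicit formula for y₀. -/
theorem stmt10 (p q ρ : ℝ) (hp : 0 < p) (hq : 0 < q) (hpq : p + q ≤ 1)
    (hρ : ρ = p / q) (hρ1 : ρ ≠ 1)
    (N i₀ : ℕ) (hN : 0 < N) (hi₀ : 0 < i₀) (hi₀N : i₀ < N)
    (p₀ q₀ r₀ s₀ pN qN rN sN : ℝ)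
    (hsum0 : p₀ + q₀ + r₀ + s₀ = 1) (hp₀ : 0 < p₀) (hq₀ : 0 < q₀) (hs₀ : 0 < s₀)
    (hr₀ : 0 ≤ r₀)
    (hsumN : pN + qN + rN + sN = 1) (hpN : 0 < pN) (hqN : 0 < qN) (hsN : 0 < sN)
    (hrN : 0 ≤ rN)
    (y₀ y₁ : ℝ)
    (heq0 : (r₀ - 1 + (1 - ρ ^ (N - 1)) / (1 - ρ ^ N) * p₀ + q₀) * y₀
        + ((1 - ρ) / (1 - ρ ^ N) * qN) * y₁ = -((1 - ρ ^ (N - i₀)) / (1 - ρ ^ N)))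
    (heq1 : ((1 - ρ) * ρ ^ (N - 1) / (1 - ρ ^ N) * p₀) * y₀
        + (rN - 1 + ρ * (1 - ρ ^ (N - 1)) / (1 - ρ ^ N) * qN + pN * ρ⁻¹) * y₁
        = (1 - ρ ^ (N - i₀)) / (1 - ρ ^ N) - 1) :
    y₀ = ((1 - ρ ^ (N - i₀)) * (sN + pN * (1 - ρ⁻¹)) + qN * (1 - ρ)) /
        ((s₀ * (1 - ρ ^ N) + p₀ * (ρ ^ (N - 1) - ρ ^ N)) * (sN + pN * (1 - ρ⁻¹))
          + s₀ * qN * (1 - ρ)) := by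
  have hρpos : 0 < ρ := by rw [hρ]; positivity
  have hρ0 : ρ ≠ 0 := ne_of_gt hρpos
  have hρN1 : ρ ^ N ≠ 1 := by
    rcases lt_or_gt_of_ne hρ1 with h | h
    · exact ne_of_lt (pow_lt_one₀ hρpos.le h hN.ne')
    · exact ne_of_gt (one_lt_pow₀ h hN.ne')
  have hD : (1 : ℝ) - ρ ^ N ≠ 0 := sub_ne_zero.mpr (Ne.symm hρN1)
  have hr0' : r₀ = 1 - p₀ - q₀ - s₀ := by linarith
  have hrN' : rN = 1 - pN - qN - sN := by linarith
  subst hr0' hrN'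
  have hpow : ρ ^ N = ρ * ρ ^ (N - 1) := by
    conv_lhs => rw [show N = (N - 1) + 1 by omega]
    rw [pow_succ]; ring
  have hD' : (1 : ℝ) - ρ * ρ ^ (N - 1) ≠ 0 := by rw [← hpow]; exact hD
  -- polynomial versions of the two equations (ρ^N written as ρ·ρ^(N-1))
  have H0 : ((1 - p₀ - q₀ - s₀ - 1) * (1 - ρ * ρ ^ (N - 1)) + (1 - ρ ^ (N - 1)) * p₀
        + q₀ * (1 - ρ * ρ ^ (N - 1))) * y₀ + (1 - ρ) * qN * y₁ = -(1 - ρ ^ (N - i₀)) := by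
    have h := heq0
    field_simp at h
    rw [hpow] at h
    linear_combination h
  have H1 : ((1 - ρ) * ρ ^ (N - 1) * p₀ * ρ) * y₀
      + ((1 - pN - qN - sN - 1) * (1 - ρ * ρ ^ (N - 1)) * ρ
        + ρ * (1 - ρ ^ (N - 1)) * qN * ρ + pN * (1 - ρ * ρ ^ (N - 1))) * y₁
      = ((1 - ρ ^ (N - i₀)) - (1 - ρ * ρ ^ (N - 1))) * ρ := by
    have h := heq1
    field_simp at h
    rw [hpow] at h
    apply mul_left_cancel₀ hD'
    apply mul_left_cancel₀ hD'
    linear_combination (1 - ρ * ρ ^ (N - 1)) ^ 2 * h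
  -- key identity: (1-ρ^N)·(Denρ·y₀ - Numρ) = 0
  have key : (1 - ρ * ρ ^ (N - 1)) *
      (((s₀ * (1 - ρ * ρ ^ (N - 1)) + p₀ * (ρ ^ (N - 1) - ρ * ρ ^ (N - 1)))
            * (sN * ρ + pN * (ρ - 1)) + s₀ * qN * (1 - ρ) * ρ) * y₀
        - ((1 - ρ ^ (N - i₀)) * (sN * ρ + pN * (ρ - 1)) + qN * (1 - ρ) * ρ)) = 0 := by
    linear_combination
      (-((sN * ρ + pN * (ρ - 1)) * (1 - ρ * ρ ^ (N - 1)) + ρ * qN * (1 - ρ))) * H0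
      - ((1 - ρ) * qN) * H1
  have key2 : ((s₀ * (1 - ρ ^ N) + p₀ * (ρ ^ (N - 1) - ρ ^ N)) * (sN * ρ + pN * (ρ - 1))
          + s₀ * qN * (1 - ρ) * ρ) * y₀
        = (1 - ρ ^ (N - i₀)) * (sN * ρ + pN * (ρ - 1)) + qN * (1 - ρ) * ρ := by
    rw [hpow]
    rcases mul_eq_zero.mp key with h | h
    · exact absurd h hD'
    · linarith [sub_eq_zero.mp h]
  -- the ρ-cleared denominator is nonzero
  have hbr : 0 < ρ * qN * (1 - ρ)
      * (s₀ * (ρ ^ (N - i₀) - ρ ^ N) + p₀ * (ρ ^ (N - 1) - ρ ^ N)) := by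
    rcases lt_or_gt_of_ne hρ1 with h | h
    · have h1 : ρ ^ N < ρ ^ (N - i₀) := pow_lt_pow_right_of_lt_one₀ hρpos h (by omega)
      have h2 : ρ ^ N < ρ ^ (N - 1) := pow_lt_pow_right_of_lt_one₀ hρpos h (by omega)
      have e1 : 0 < s₀ * (ρ ^ (N - i₀) - ρ ^ N) := mul_pos hs₀ (by linarith)
      have e2 : 0 < p₀ * (ρ ^ (N - 1) - ρ ^ N) := mul_pos hp₀ (by linarith)
      have e3 : 0 < ρ * qN * (1 - ρ) := mul_pos (mul_pos hρpos hqN) (by linarith)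
      exact mul_pos e3 (by linarith)
    · have h1 : ρ ^ (N - i₀) < ρ ^ N := pow_lt_pow_right₀ h (by omega)
      have h2 : ρ ^ (N - 1) < ρ ^ N := pow_lt_pow_right₀ h (by omega)
      have e1 : s₀ * (ρ ^ (N - i₀) - ρ ^ N) < 0 := mul_neg_of_pos_of_neg hs₀ (by linarith)
      have e2 : p₀ * (ρ ^ (N - 1) - ρ ^ N) < 0 := mul_neg_of_pos_of_neg hp₀ (by linarith)
      have e3 : ρ * qN * (1 - ρ) < 0 := mul_neg_of_pos_of_neg (mul_pos hρpos hqN) (by linarith)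
      exact mul_pos_of_neg_of_neg e3 (by linarith)
  have hDen : ((s₀ * (1 - ρ ^ N) + p₀ * (ρ ^ (N - 1) - ρ ^ N)) * (sN * ρ + pN * (ρ - 1))
          + s₀ * qN * (1 - ρ) * ρ) ≠ 0 := by
    intro hz
    have hnum : (1 - ρ ^ (N - i₀)) * (sN * ρ + pN * (ρ - 1)) + qN * (1 - ρ) * ρ = 0 := by
      rw [hz, zero_mul] at key2; linarith
    have hzero : ρ * qN * (1 - ρ)
        * (s₀ * (ρ ^ (N - i₀) - ρ ^ N) + p₀ * (ρ ^ (N - 1) - ρ ^ N)) = 0 := by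
      linear_combination (-(1 - ρ ^ (N - i₀))) * hz
        + (s₀ * (1 - ρ ^ N) + p₀ * (ρ ^ (N - 1) - ρ ^ N)) * hnum
    exact hbr.ne' hzero
  -- conclude
  have hDen' : (s₀ * (1 - ρ ^ N) + p₀ * (ρ ^ (N - 1) - ρ ^ N)) * (sN + pN * (1 - ρ⁻¹))
      + s₀ * qN * (1 - ρ) ≠ 0 := by
    intro hz
    apply hDen
    have h2 : ρ * ((s₀ * (1 - ρ ^ N) + p₀ * (ρ ^ (N - 1) - ρ ^ N)) * (sN + pN * (1 - ρ⁻¹))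
      + s₀ * qN * (1 - ρ)) = 0 := by rw [hz, mul_zero]
    field_simp at h2
    linear_combination h2
  rw [eq_div_iff hDen']
  apply mul_left_cancel₀ hρ0
  field_simp
  linear_combination key2
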